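/- For all integers r, s ≥ 0, the composition of a left differential operator of order ≤ r with a left differential operator of order ≤ s is a left differential operator of order ≤ r+s; that is, if D₁ ∈ 𝒟_r(A) and D₂ ∈ 𝒟_s(A) then D₁∘D₂ ∈ 𝒟_{r+s}(A). In other words, the filtration of 𝒟(A) = ⋃_n 𝒟_n(A) by the 𝒟_n(A) is multiplicative. -/

import Mathlib

/-- The recursively defined k-submodules of left differential operators on a
not necessarily commutative k-algebra A:
`Dnc k A n` is the k-submodule of `End_k(A)` spanned by
`{l_a ∘ φ ∘ l_b : a b : A, φ ∈ 𝒟'_n(A)}`, where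
`𝒟'_n(A) = {φ : l_t ∘ φ - φ ∘ l_t ∈ 𝒟_{n-1}(A) for all t}` and `𝒟_{-1}(A) = 0`. -/
noncomputable def Dnc (k : Type*) (A : Type*) [CommRing k] [Ring A] [Algebra k A] :
    ℕ → Submodule k (Module.End k A)
  | 0 => Submodule.span k {ψ | ∃ (a b : A) (φ : Module.End k A),
      (∀ t : A, LinearMap.mulLeft k t * φ - φ * LinearMap.mulLeft k t = 0) ∧
      ψ = LinearMap.mulLeft k a * φ * LinearMap.mulLeft k b}
  | (n + 1) => Submodule.span k {ψ | ∃ (a b : A) (φ : Module.End k A),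
      (∀ t : A, LinearMap.mulLeft k t * φ - φ * LinearMap.mulLeft k t ∈ Dnc k A n) ∧
      ψ = LinearMap.mulLeft k a * φ * LinearMap.mulLeft k b}

section Aux

variable (k : Type*) (A : Type*) [CommRing k] [Ring A] [Algebra k A]

/-- The auxiliary sets `𝒟'_n(A)`. -/
def Dprime : ℕ → Set (Module.End k A)
  | 0 => {φ | ∀ t : A, LinearMap.mulLeft k t * φ - φ * LinearMap.mulLeft k t = 0}
  | (n + 1) => {φ | ∀ t : A,
      LinearMap.mulLeft k t * φ - φ * LinearMap.mulLeft k t ∈ Dnc k A n}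

lemma Dnc_eq (n : ℕ) : Dnc k A n = Submodule.span k
    {ψ | ∃ (a b : A) (φ : Module.End k A), φ ∈ Dprime k A n ∧
      ψ = LinearMap.mulLeft k a * φ * LinearMap.mulLeft k b} := by
  cases n <;> rfl

variable {k A}

local notation "L" => LinearMap.mulLeft k

lemma Lmul (a b : A) : (L (a * b) : Module.End k A) = L a * L b := by
  ext x; simp [mul_assoc]

lemma mem_Dnc (n : ℕ) (a b : A) {φ : Module.End k A} (h : φ ∈ Dprime k A n) :
    L a * φ * L b ∈ Dnc k A n := by
  rw [Dnc_eq]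
  exact Submodule.subset_span ⟨a, b, φ, h, rfl⟩

lemma Dprime_mem_Dnc {n : ℕ} {φ : Module.End k A} (h : φ ∈ Dprime k A n) :
    φ ∈ Dnc k A n := by
  have := mem_Dnc n 1 1 h
  rwa [LinearMap.mulLeft_one, ← Module.End.one_eq_id, one_mul, mul_one] at this

lemma conj_mem_Dnc (n : ℕ) (a b : A) {X : Module.End k A} (h : X ∈ Dnc k A n) :
    L a * X * L b ∈ Dnc k A n := by
  rw [Dnc_eq] at h
  induction h using Submodule.span_induction with
  | mem x hx =>
      obtain ⟨c, d, φ, hφ, rfl⟩ := hx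
      have : L a * (L c * φ * L d) * L b = L (a * c) * φ * L (d * b) := by
        rw [Lmul, Lmul]; noncomm_ring
      rw [this]
      exact mem_Dnc n _ _ hφ
  | zero => simp
  | add x y hx hy ihx ihy =>
      have : L a * (x + y) * L b = L a * x * L b + L a * y * L b := by noncomm_ring
      rw [this]; exact add_mem ihx ihy
  | smul c x hx ihx =>
      have : L a * (c • x) * L b = c • (L a * x * L b) := by
        simp only [mul_smul_comm, smul_mul_assoc]
      rw [this]; exact Submodule.smul_mem _ _ ihx

lemma Dnc_mono : ∀ n : ℕ, Dnc k A n ≤ Dnc k A (n + 1) := by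
  intro n
  induction n with
  | zero =>
      rw [Dnc_eq k A 0, Dnc_eq k A 1]
      apply Submodule.span_mono
      rintro ψ ⟨a, b, φ, hφ, rfl⟩
      refine ⟨a, b, φ, fun t => ?_, rfl⟩
      rw [hφ t]; exact zero_mem _
  | succ n ih =>
      rw [Dnc_eq k A (n + 1), Dnc_eq k A (n + 2)]
      apply Submodule.span_mono
      rintro ψ ⟨a, b, φ, hφ, rfl⟩
      exact ⟨a, b, φ, fun t => ih (hφ t), rfl⟩

lemma main (n : ℕ) :
    (∀ r s : ℕ, r + s = n → ∀ φ ∈ Dprime k A r, ∀ ψ ∈ Dprime k A s,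
      φ * ψ ∈ Dprime k A n) ∧
    (∀ r s : ℕ, r + s = n → ∀ X ∈ Dnc k A r, ∀ Y ∈ Dnc k A s,
      X * Y ∈ Dnc k A n) := by
  induction n using Nat.strong_induction_on with
  | _ n IH =>
  have partA : ∀ r s : ℕ, r + s = n → ∀ φ ∈ Dprime k A r, ∀ ψ ∈ Dprime k A s,
      φ * ψ ∈ Dprime k A n := by
    intro r s hrs φ hφ ψ hψ
    have key : ∀ t : A, L t * (φ * ψ) - (φ * ψ) * L t =
        (L t * φ - φ * L t) * ψ + φ * (L t * ψ - ψ * L t) := by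
      intro t; simp only [mul_sub, sub_mul, mul_assoc]; abel
    cases n with
    | zero =>
        obtain ⟨hr, hs⟩ := Nat.add_eq_zero.mp hrs
        subst hr; subst hs
        intro t
        rw [key t, hφ t, hψ t]
        simp
    | succ m =>
        intro t
        show _ ∈ Dnc k A m
        rw [key t]
        apply add_mem
        · rcases r with _ | r'
          · rw [hφ t]; simp
          · have h1 : (L t * φ - φ * L t) ∈ Dnc k A r' := hφ t
            have h2 : ψ ∈ Dnc k A s := Dprime_mem_Dnc hψ
            exact (IH m (by omega)).2 r' s (by omega) _ h1 _ h2
        · rcases s with _ | s'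
          · rw [hψ t]; simp
          · have h1 : (L t * ψ - ψ * L t) ∈ Dnc k A s' := hψ t
            have h2 : φ ∈ Dnc k A r := Dprime_mem_Dnc hφ
            exact (IH m (by omega)).2 r s' (by omega) _ h2 _ h1
  refine ⟨partA, ?_⟩
  intro r s hrs X hX Y hY
  -- key computation on generators
  have key : ∀ (a b : A) (φ : Module.End k A), φ ∈ Dprime k A r →
      ∀ (c d : A) (ψ : Module.End k A), ψ ∈ Dprime k A s →
      (L a * φ * L b) * (L c * ψ * L d) ∈ Dnc k A n := by
    intro a b φ hφ c d ψ hψ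
    have expand : (L a * φ * L b) * (L c * ψ * L d) =
        L a * (φ * ψ) * (L b * L c * L d) +
        L a * (φ * ((L b * L c) * ψ - ψ * (L b * L c))) * L d := by
      simp only [mul_sub, sub_mul, mul_assoc]; abel
    rw [expand]
    apply add_mem
    · have h1 : L b * L c * L d = (L (b * c * d) : Module.End k A) := by
        rw [Lmul, Lmul]
      rw [h1]
      exact mem_Dnc n a _ (partA r s hrs φ hφ ψ hψ)
    · rw [← Lmul]
      rcases s with _ | s'
      · rw [hψ (b * c)]
        simp
      · have hW : (L (b * c) * ψ - ψ * L (b * c)) ∈ Dnc k A s' := hψ (b * c)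
        have hφ' : φ ∈ Dnc k A r := Dprime_mem_Dnc hφ
        have hprod : φ * (L (b * c) * ψ - ψ * L (b * c)) ∈ Dnc k A (r + s') :=
          (IH (r + s') (by omega)).2 r s' rfl _ hφ' _ hW
        have : φ * (L (b * c) * ψ - ψ * L (b * c)) ∈ Dnc k A n := by
          have h := Dnc_mono (r + s') hprod
          have : r + s' + 1 = n := by omega
          rwa [this] at h
        exact conj_mem_Dnc n a d this
  -- reduce to generators by two span inductions
  rw [Dnc_eq] at hY
  induction hY using Submodule.span_induction with
  | mem y hy =>
      obtain ⟨c, d, ψ, hψ, rfl⟩ := hy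
      rw [Dnc_eq] at hX
      induction hX using Submodule.span_induction with
      | mem x hx =>
          obtain ⟨a, b, φ, hφ, rfl⟩ := hx
          exact key a b φ hφ c d ψ hψ
      | zero => rw [zero_mul]; exact zero_mem _
      | add x y hx hy ihx ihy => rw [add_mul]; exact add_mem ihx ihy
      | smul c' x hx ihx => rw [smul_mul_assoc]; exact Submodule.smul_mem _ _ ihx
  | zero => rw [mul_zero]; exact zero_mem _
  | add x y hx hy ihx ihy => rw [mul_add]; exact add_mem ihx ihy
  | smul c x hx ihx => rw [mul_smul_comm]; exact Submodule.smul_mem _ _ ihx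

end Aux

/-- The filtration by the `𝒟_n(A)` is multiplicative:
`𝒟_r(A) ∘ 𝒟_s(A) ⊆ 𝒟_{r+s}(A)`. -/
theorem Dnc_mul_mem (k : Type*) (A : Type*) [CommRing k] [Ring A] [Algebra k A]
    (r s : ℕ) (D₁ D₂ : Module.End k A)
    (h₁ : D₁ ∈ Dnc k A r) (h₂ : D₂ ∈ Dnc k A s) :
    D₁ * D₂ ∈ Dnc k A (r + s) := by
  exact (main (r + s)).2 r s rfl D₁ h₁ D₂ h₂
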